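/- Let p_1, …, p_m be pairwise distinct nonzero complex numbers and α_1, …, α_m complex numbers. For every radius R > max_j |p_j|, the circle integral (1/(2πi)) ∮_{|z|=R} z·(∑_{j=1}^m α_j/(z−p_j))² dz equals (∑_{j=1}^m α_j)². -/

import Mathlib

open Complex Metric Set

/-- Circle integral of a finite sum is the sum of circle integrals. -/
lemma circleIntegral_finset_sum {ι : Type*} (s : Finset ι) (f : ι → ℂ → ℂ) (c : ℂ) (R : ℝ)
    (h : ∀ i ∈ s, CircleIntegrable (f i) c R) :
    (∮ z in C(c, R), ∑ i ∈ s, f i z) = ∑ i ∈ s, ∮ z in C(c, R), f i z := by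
  simp only [circleIntegral, smul_eq_mul, Finset.mul_sum]
  exact intervalIntegral.integral_finset_sum (fun i hi => (h i hi).out)

lemma circleIntegral_add' {f g : ℂ → ℂ} {c : ℂ} {R : ℝ} (hf : CircleIntegrable f c R)
    (hg : CircleIntegrable g c R) :
    (∮ z in C(c, R), (f z + g z)) = (∮ z in C(c, R), f z) + ∮ z in C(c, R), g z := by
  simp only [circleIntegral, smul_add, intervalIntegral.integral_add hf.out hg.out]

/-- Let `p 1, …, p m` be pairwise distinct nonzero complex numbers and `α 1, …, α m`
complex numbers.  For every radius `R > max_j |p_j|`, the circle integral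
`(1/(2πi)) ∮_{|z|=R} z·(∑_j α_j/(z−p_j))² dz` equals `(∑_j α_j)²`. -/
theorem stmt_13 (m : ℕ) (p : Fin m → ℂ) (α : Fin m → ℂ)
    (hp : Function.Injective p) (hp0 : ∀ j, p j ≠ 0)
    (R : ℝ) (hR : ∀ j, ‖p j‖ < R) :
    (1 / (2 * Real.pi * Complex.I)) *
        (∮ z in C(0, R), z * (∑ j, α j / (z - p j)) ^ 2)
      = (∑ j, α j) ^ 2 := by
  rcases Nat.eq_zero_or_pos m with hm | hm
  · subst hm; simp [circleIntegral]
  have hR0 : (0 : ℝ) < R :=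
    lt_of_le_of_lt (norm_nonneg (p ⟨0, hm⟩)) (hR ⟨0, hm⟩)
  -- points p j are not on the sphere
  have hns : ∀ (j : Fin m), ∀ z ∈ sphere (0 : ℂ) R, z ≠ p j := by
    intro j z hz
    intro h
    rw [mem_sphere_zero_iff_norm, h] at hz
    exact (hR j).ne hz
  have hball : ∀ j : Fin m, p j ∈ ball (0 : ℂ) R := by
    intro j; rw [mem_ball_zero_iff]; exact hR j
  -- continuity of inverse factors on the sphere
  have hcont : ∀ j : Fin m, ContinuousOn (fun z : ℂ => (z - p j)⁻¹) (sphere (0 : ℂ) R) := by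
    intro j
    exact ContinuousOn.inv₀ (by fun_prop) (fun z hz => sub_ne_zero.2 (hns j z hz))
  -- the summands
  set g : Fin m × Fin m → ℂ → ℂ :=
    fun jk z => α jk.1 * α jk.2 * (z * ((z - p jk.1)⁻¹ * (z - p jk.2)⁻¹)) with hg
  have hint : ∀ jk : Fin m × Fin m, CircleIntegrable (g jk) 0 R := by
    intro jk
    refine ContinuousOn.circleIntegrable hR0.le ?_
    exact (continuousOn_const.mul
      ((continuousOn_id.mul ((hcont jk.1).mul (hcont jk.2)))))
  -- pointwise expansion
  have key : ∀ z : ℂ, z * (∑ j, α j / (z - p j)) ^ 2 = ∑ jk : Fin m × Fin m, g jk z := by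
    intro z
    rw [Fintype.sum_prod_type, sq, Finset.sum_mul_sum, Finset.mul_sum]
    refine Finset.sum_congr rfl fun j _ => ?_
    rw [Finset.mul_sum]
    refine Finset.sum_congr rfl fun k _ => ?_
    simp only [hg, div_eq_mul_inv]
    ring
  have hsum : (∮ z in C(0, R), z * (∑ j, α j / (z - p j)) ^ 2)
      = ∑ jk : Fin m × Fin m, ∮ z in C(0, R), g jk z := by
    rw [show (fun z => z * (∑ j, α j / (z - p j)) ^ 2) = fun z => ∑ jk : Fin m × Fin m, g jk z
      from funext key]
    exact circleIntegral_finset_sum _ _ _ _ (fun jk _ => hint jk)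
  -- value of each summand integral
  have hval : ∀ jk : Fin m × Fin m,
      (∮ z in C(0, R), g jk z) = (2 * Real.pi * Complex.I) * (α jk.1 * α jk.2) := by
    rintro ⟨j, k⟩
    have : (∮ z in C(0, R), g (j, k) z)
        = α j * α k * ∮ z in C(0, R), z * ((z - p j)⁻¹ * (z - p k)⁻¹) := by
      simp only [hg]
      exact circleIntegral.integral_const_mul _ _ _ _
    rw [this]
    have hmain : (∮ z in C(0, R), z * ((z - p j)⁻¹ * (z - p k)⁻¹))
        = 2 * Real.pi * Complex.I := by
      rcases eq_or_ne j k with rfl | hjk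
      · -- z/(z-p)² = (z-p)⁻¹ + p·(z-p)⁻²
        have heq : EqOn (fun z : ℂ => z * ((z - p j)⁻¹ * (z - p j)⁻¹))
            (fun z : ℂ => (z - p j)⁻¹ + p j * (z - p j) ^ (-2 : ℤ)) (sphere (0 : ℂ) R) := by
          intro z hz
          have hne : z - p j ≠ 0 := sub_ne_zero.2 (hns j z hz)
          have h2 : ((z - p j) ^ (-2 : ℤ) : ℂ) = ((z - p j) ^ 2)⁻¹ := by
            rw [zpow_neg]; norm_cast
          simp only [h2]
          field_simp
          ring
        have hi1 : CircleIntegrable (fun z : ℂ => (z - p j)⁻¹) 0 R :=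
          (hcont j).circleIntegrable hR0.le
        have hi2 : CircleIntegrable (fun z : ℂ => p j * (z - p j) ^ (-2 : ℤ)) 0 R :=
          ContinuousOn.circleIntegrable hR0.le (continuousOn_const.mul
            ((continuousOn_id.sub continuousOn_const).zpow₀ (-2)
              (fun z hz => Or.inl (sub_ne_zero.2 (hns j z hz)))))
        rw [circleIntegral.integral_congr hR0.le heq, circleIntegral_add' hi1 hi2,
          circleIntegral.integral_sub_inv_of_mem_ball (hball j),
          circleIntegral.integral_const_mul,
          circleIntegral.integral_sub_zpow_of_ne (by decide) 0 (p j) R]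
        ring
      · -- partial fractions for distinct poles
        have hpk : p j - p k ≠ 0 := sub_ne_zero.2 (fun h => hjk (hp h))
        have heq : EqOn (fun z : ℂ => z * ((z - p j)⁻¹ * (z - p k)⁻¹))
            (fun z : ℂ => p j / (p j - p k) * (z - p j)⁻¹ + p k / (p k - p j) * (z - p k)⁻¹)
            (sphere (0 : ℂ) R) := by
          intro z hz
          have hnej : z - p j ≠ 0 := sub_ne_zero.2 (hns j z hz)
          have hnek : z - p k ≠ 0 := sub_ne_zero.2 (hns k z hz)
          have hpk' : p k - p j ≠ 0 := fun h => hpk (by linear_combination -h)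
          field_simp
          ring
        rw [circleIntegral.integral_congr hR0.le heq,
          circleIntegral_add' (f := fun z => p j / (p j - p k) * (z - p j)⁻¹)
            (g := fun z => p k / (p k - p j) * (z - p k)⁻¹)
            (ContinuousOn.circleIntegrable hR0.le (continuousOn_const.mul (hcont j)))
            (ContinuousOn.circleIntegrable hR0.le (continuousOn_const.mul (hcont k))),
          circleIntegral.integral_const_mul, circleIntegral.integral_const_mul,
          circleIntegral.integral_sub_inv_of_mem_ball (hball j),
          circleIntegral.integral_sub_inv_of_mem_ball (hball k)]
        have hpk' : p k - p j ≠ 0 := fun h => hpk (by linear_combination -h)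
        field_simp
        ring
    rw [hmain]; ring
  rw [hsum, Finset.sum_congr rfl (fun jk _ => hval jk), ← Finset.mul_sum]
  have : (∑ jk : Fin m × Fin m, α jk.1 * α jk.2) = (∑ j, α j) ^ 2 := by
    rw [Fintype.sum_prod_type, sq, Finset.sum_mul_sum]
  rw [this]
  have h2 : (2 * (Real.pi : ℂ) * Complex.I) ≠ 0 := Complex.two_pi_I_ne_zero
  field_simp
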